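/- arXiv:2202.08747 — 2 statements merged into one kernel-verified Lean document; each statement's English description precedes it below -/
import Mathlib

section
/- Let a ≥ b ≥ 1 with gcd(a,b) = 1 and a ≥ 6, and let S = {0, a, a+b}. Then π({S, -S}) ≤ (a+1)/(3a) < 2/5, where -S = {0, -a, -(a+b)} is the reflection of S. -/
/-- A shooting pattern `X` hits a ship `S` if every translate of `S` intersects `X`. -/
def Hits (X S : Set ℤ) : Prop := ∀ n : ℤ, ∃ s ∈ S, n + s ∈ X

/-- Lower asymptotic density of a set of integers. -/
noncomputable def lowerDensity (X : Set ℤ) : ℝ :=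
  Filter.liminf (fun N : ℕ =>
    ((X ∩ Set.Icc (-(N:ℤ)) (N:ℤ)).ncard : ℝ) / (2 * N + 1)) Filter.atTop

/-- Optimal piercing density of a family of ships. -/
noncomputable def piercing (F : Set (Set ℤ)) : ℝ :=
  sInf (lowerDensity '' {X | ∀ S ∈ F, Hits X S})

def cc (a b : ℤ) : ℤ := if (a - b) % 3 = 0 then 1 else (b - a) % 3
def iOf (a v x : ℤ) : ℤ := (x * v) % a
def jOf (a b v x : ℤ) : ℤ := (x - iOf a v x * b) / a
def Xset (a b v : ℤ) : Set ℤ :=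
  {x | (iOf a v x + jOf a b v x) % 3 = 0 ∨ (iOf a v x = 0 ∧ jOf a b v x % 3 = cc a b)}

lemma cc_mem (a b : ℤ) : cc a b = 1 ∨ cc a b = 2 := by
  unfold cc; split_ifs with h
  · left; rfl
  · omega

lemma dvd_key (a b u v x : ℤ) (h : u*a + v*b = 1) : a ∣ (x - iOf a v x * b) := by
  refine ⟨x*u + (x*v/a)*b, ?_⟩
  have hm : iOf a v x = x*v - a*(x*v/a) := by
    rw [iOf, Int.emod_def]
  rw [hm]
  linear_combination (-x) * h

lemma repr_spec (a b u v x : ℤ) (ha : 0 < a) (h : u*a + v*b = 1) :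
    0 ≤ iOf a v x ∧ iOf a v x < a ∧ x = iOf a v x * b + jOf a b v x * a := by
  refine ⟨Int.emod_nonneg _ (by omega), Int.emod_lt_of_pos _ ha, ?_⟩
  have := Int.ediv_mul_cancel (dvd_key a b u v x h)
  rw [jOf]
  omega

lemma iOf_eq (a b u v i j : ℤ) (ha : 0 < a) (h : u*a + v*b = 1)
    (h0 : 0 ≤ i) (hia : i < a) :
    iOf a v (i*b + j*a) = i ∧ jOf a b v (i*b + j*a) = j := by
  have e : (i*b + j*a)*v = i + a*(j*v - i*u) := by linear_combination i * h
  have hi : iOf a v (i*b + j*a) = i := by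
    rw [iOf, e, Int.add_mul_emod_self_left, Int.emod_eq_of_lt h0 hia]
  refine ⟨hi, ?_⟩
  rw [jOf, hi]
  have : i*b + j*a - i*b = j*a := by ring
  rw [this, Int.mul_ediv_cancel _ (by omega)]

lemma mem_X_of (a b u v i j : ℤ) (ha : 0 < a) (h : u*a + v*b = 1)
    (h0 : 0 ≤ i) (hia : i < a)
    (hc : (i+j) % 3 = 0 ∨ (i = 0 ∧ j % 3 = cc a b)) : i*b + j*a ∈ Xset a b v := by
  have := iOf_eq a b u v i j ha h h0 hia
  rw [Xset, Set.mem_setOf_eq, this.1, this.2]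
  exact hc

lemma hits1 (a b u v : ℤ) (ha : 2 ≤ a) (h : u*a + v*b = 1) :
    Hits (Xset a b v) {0, a, a + b} := by
  intro n
  have ha0 : (0:ℤ) < a := by omega
  obtain ⟨h0, hia, hx⟩ := repr_spec a b u v n ha0 h
  set i := iOf a v n with hi
  set j := jOf a b v n with hj
  by_cases hlt : i < a - 1
  · rcases (show (i+j)%3 = 0 ∨ (i+(j+1))%3 = 0 ∨ ((i+1)+(j+1))%3 = 0 by omega) with h1|h1|h1
    · exact ⟨0, by simp, by rw [add_zero, hx]; exact mem_X_of a b u v i j ha0 h h0 hia (Or.inl h1)⟩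
    · refine ⟨a, by simp, ?_⟩
      have e : n + a = i*b + (j+1)*a := by rw [hx]; ring
      rw [e]; exact mem_X_of a b u v i (j+1) ha0 h h0 hia (Or.inl h1)
    · refine ⟨a + b, by simp, ?_⟩
      have e : n + (a+b) = (i+1)*b + (j+1)*a := by rw [hx]; ring
      rw [e]; exact mem_X_of a b u v (i+1) (j+1) ha0 h (by omega) (by omega) (Or.inl h1)
  · have hieq : i = a - 1 := by omega
    by_cases h1 : (i+j)%3 = 0
    · exact ⟨0, by simp, by rw [add_zero, hx]; exact mem_X_of a b u v i j ha0 h h0 hia (Or.inl h1)⟩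
    by_cases h2 : (i+(j+1))%3 = 0
    · refine ⟨a, by simp, ?_⟩
      have e : n + a = i*b + (j+1)*a := by rw [hx]; ring
      rw [e]; exact mem_X_of a b u v i (j+1) ha0 h h0 hia (Or.inl h2)
    · refine ⟨a + b, by simp, ?_⟩
      have e : n + (a+b) = 0*b + (j+1+b)*a := by rw [hx, hieq]; ring
      rw [e]
      refine mem_X_of a b u v 0 (j+1+b) ha0 h le_rfl ha0 ?_
      unfold cc
      split_ifs with h3
      · left; omega
      · right; exact ⟨rfl, by omega⟩

lemma hits2 (a b u v : ℤ) (ha : 2 ≤ a) (h : u*a + v*b = 1) :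
    Hits (Xset a b v) {0, -a, -(a + b)} := by
  intro n
  have ha0 : (0:ℤ) < a := by omega
  obtain ⟨h0, hia, hx⟩ := repr_spec a b u v n ha0 h
  set i := iOf a v n with hi
  set j := jOf a b v n with hj
  by_cases hpos : 1 ≤ i
  · rcases (show (i+j)%3 = 0 ∨ (i+(j-1))%3 = 0 ∨ ((i-1)+(j-1))%3 = 0 by omega) with h1|h1|h1
    · exact ⟨0, by simp, by rw [add_zero, hx]; exact mem_X_of a b u v i j ha0 h h0 hia (Or.inl h1)⟩
    · refine ⟨-a, by simp, ?_⟩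
      have e : n + -a = i*b + (j-1)*a := by rw [hx]; ring
      rw [e]; exact mem_X_of a b u v i (j-1) ha0 h h0 hia (Or.inl h1)
    · refine ⟨-(a+b), by simp, ?_⟩
      have e : n + -(a+b) = (i-1)*b + (j-1)*a := by rw [hx]; ring
      rw [e]; exact mem_X_of a b u v (i-1) (j-1) ha0 h (by omega) (by omega) (Or.inl h1)
  · have hieq : i = 0 := by omega
    have hc := cc_mem a b
    rcases (show (j%3 = 0 ∨ j%3 = cc a b) ∨ ((j-1)%3 = 0 ∨ (j-1)%3 = cc a b) by omega) with h1|h1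
    · refine ⟨0, by simp, ?_⟩
      rw [add_zero, hx, hieq]
      refine mem_X_of a b u v 0 j ha0 h le_rfl ha0 ?_
      rcases h1 with h1|h1
      · left; omega
      · right; exact ⟨rfl, h1⟩
    · refine ⟨-a, by simp, ?_⟩
      have e : n + -a = 0*b + (j-1)*a := by rw [hx, hieq]; ring
      rw [e]
      refine mem_X_of a b u v 0 (j-1) ha0 h le_rfl ha0 ?_
      rcases h1 with h1|h1
      · left; omega
      · right; exact ⟨rfl, h1⟩
lemma iOf_bounds (a v x : ℤ) (ha : 0 < a) : 0 ≤ iOf a v x ∧ iOf a v x < a :=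
  ⟨Int.emod_nonneg _ (by omega), Int.emod_lt_of_pos _ ha⟩

lemma card_bound (a b u v : ℤ) (ha : 1 ≤ a) (h : u*a + v*b = 1) (N : ℕ) :
    ((Xset a b v ∩ Set.Icc (-(N:ℤ)) (N:ℤ)).ncard : ℝ) ≤
      (2*(N:ℝ)/(3*(a:ℝ)) + 1) * ((a:ℝ)+1) := by
  classical
  have ha0 : (0:ℤ) < a := ha
  have h3a : (0:ℤ) < 3*a := by omega
  set q : ℤ := (2*(N:ℤ)) / (3*a) with hq
  set T : Finset (ℤ × ℤ) :=
    ((Finset.Icc (1:ℤ) (a-1)).image fun i => (i, (-i) % 3)) ∪ {(0,0),(0, cc a b)} with hT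
  set F : Finset ℤ := (Finset.Icc (-(N:ℤ)) (N:ℤ)).filter (· ∈ Xset a b v) with hF
  have hset : Xset a b v ∩ Set.Icc (-(N:ℤ)) (N:ℤ) = ↑F := by
    ext x
    simp only [hF, Finset.coe_filter, Set.mem_setOf_eq, Finset.mem_Icc, Set.mem_inter_iff,
      Set.mem_Icc]
    tauto
  rw [hset, Set.ncard_coe_finset]
  have hq0 : 0 ≤ q := Int.ediv_nonneg (by positivity) (by omega)
  have hcard : F.card ≤ ((Finset.Icc (0:ℤ) q) ×ˢ T).card := by
    apply Finset.card_le_card_of_injOn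
      (fun x => ((x + N)/(3*a), (iOf a v x, jOf a b v x % 3)))
    · intro x hx
      rw [Finset.mem_coe] at hx ⊢
      rw [hF, Finset.mem_filter, Finset.mem_Icc] at hx
      obtain ⟨⟨hx1, hx2⟩, hxX⟩ := hx
      rw [Finset.mem_product]
      constructor
      · rw [Finset.mem_Icc]
        exact ⟨Int.ediv_nonneg (by omega) (by omega),
          Int.ediv_le_ediv h3a (by omega)⟩
      · obtain ⟨hi0, hia⟩ := iOf_bounds a v x ha0
        rw [Xset, Set.mem_setOf_eq] at hxX
        by_cases hiz : iOf a v x = 0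
        · have : jOf a b v x % 3 = 0 ∨ jOf a b v x % 3 = cc a b := by
            rcases hxX with h1 | h1
            · left; omega
            · right; exact h1.2
          rw [hT]
          apply Finset.mem_union_right
          rcases this with h1 | h1
          · exact Finset.mem_insert.2 (Or.inl (by rw [Prod.mk.injEq]; exact ⟨hiz, h1⟩))
          · exact Finset.mem_insert.2 (Or.inr (Finset.mem_singleton.2
              (by rw [Prod.mk.injEq]; exact ⟨hiz, h1⟩)))
        · have h1 : (iOf a v x + jOf a b v x) % 3 = 0 := by
            rcases hxX with h1 | h1
            · exact h1
            · exact absurd h1.1 hiz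
          rw [hT]
          apply Finset.mem_union_left
          rw [Finset.mem_image]
          exact ⟨iOf a v x, Finset.mem_Icc.2 ⟨by omega, by omega⟩,
            by rw [Prod.mk.injEq]; exact ⟨rfl, by omega⟩⟩
    · intro x _ y _ hxy
      simp only [Prod.mk.injEq] at hxy
      obtain ⟨hqeq, hieq, hjeq⟩ := hxy
      obtain ⟨_, _, hxr⟩ := repr_spec a b u v x ha0 h
      obtain ⟨_, _, hyr⟩ := repr_spec a b u v y ha0 h
      set d : ℤ := jOf a b v x - jOf a b v y with hd
      have h3d : 3 ∣ d := by omega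
      have hdiff : x - y = d * a := by
        rw [hxr, hyr, hieq]; ring
      have hrx := Int.emod_nonneg (x + N) (by omega : (3*a) ≠ 0)
      have hrx2 := Int.emod_lt_of_pos (x + N) h3a
      have hry := Int.emod_nonneg (y + N) (by omega : (3*a) ≠ 0)
      have hry2 := Int.emod_lt_of_pos (y + N) h3a
      have hex := Int.emod_def (x + N) (3*a)
      have hey := Int.emod_def (y + N) (3*a)
      have hln : 3 * a * ((x + N) / (3*a)) = 3 * a * ((y + N) / (3*a)) := by rw [hqeq]
      have hc1 : x - y < 3 * a := by linarith
      have hc2 : -(3*a) < x - y := by linarith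
      have hd3 : d < 3 :=
        lt_of_mul_lt_mul_right (show d * a < 3 * a by linarith) (le_of_lt ha0)
      have hd3' : -3 < d := by
        have h' : (-3) * a < d * a := by linarith
        exact lt_of_mul_lt_mul_right h' (le_of_lt ha0)
      have hd0 : d = 0 := by omega
      have : x - y = 0 := by rw [hdiff, hd0]; ring
      omega
  have hTcard : (T.card : ℝ) ≤ (a:ℝ) + 1 := by
    have h1 : T.card ≤ (a-1).toNat + 2 := by
      rw [hT]
      refine le_trans (Finset.card_union_le _ _) ?_
      have h2 : ((Finset.Icc (1:ℤ) (a-1)).image fun i => (i, (-i) % 3)).card ≤ (a-1).toNat := by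
        refine le_trans (Finset.card_image_le) ?_
        rw [Int.card_Icc]
        omega
      have h3 : ({(0,0),(0, cc a b)} : Finset (ℤ × ℤ)).card ≤ 2 :=
        le_trans (Finset.card_insert_le _ _) (by simp)
      omega
    have e1 : (((a-1).toNat : ℕ) : ℝ) = (a:ℝ) - 1 := by
      have e0 : (((a-1).toNat : ℕ) : ℤ) = a - 1 := Int.toNat_of_nonneg (by omega)
      calc (((a-1).toNat : ℕ) : ℝ) = ((((a-1).toNat : ℕ) : ℤ) : ℝ) := by push_cast; ring
        _ = (a:ℝ) - 1 := by rw [e0]; push_cast; ring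
    have h1' : (T.card : ℝ) ≤ (((a-1).toNat : ℕ) : ℝ) + 2 := by exact_mod_cast h1
    linarith
  have hIcard : ((Finset.Icc (0:ℤ) q).card : ℝ) = (q:ℝ) + 1 := by
    rw [Int.card_Icc]
    have e0 : (((q + 1 - 0).toNat : ℕ) : ℤ) = q + 1 := by
      rw [Int.toNat_of_nonneg (by omega)]; ring
    calc (((q + 1 - 0).toNat : ℕ) : ℝ) = ((((q + 1 - 0).toNat : ℕ) : ℤ) : ℝ) := by
          push_cast; ring
      _ = (q:ℝ) + 1 := by rw [e0]; push_cast; ring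
  have hqle : (q:ℝ) ≤ 2*(N:ℝ)/(3*(a:ℝ)) := by
    have h1 : 3*a*q ≤ 2*(N:ℤ) := by
      rw [hq, mul_comm]
      exact Int.ediv_mul_le _ (by omega)
    have h2 : (3*(a:ℝ))*(q:ℝ) ≤ 2*(N:ℝ) := by exact_mod_cast h1
    rw [le_div_iff₀ (by positivity)]
    linarith
  calc (F.card : ℝ) ≤ (((Finset.Icc (0:ℤ) q) ×ˢ T).card : ℝ) := by exact_mod_cast hcard
    _ = ((Finset.Icc (0:ℤ) q).card : ℝ) * (T.card : ℝ) := by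
        rw [Finset.card_product]; push_cast; ring
    _ ≤ ((q:ℝ) + 1) * ((a:ℝ)+1) := by
        rw [hIcard]
        apply mul_le_mul_of_nonneg_left hTcard
        have : (0:ℝ) ≤ (q:ℝ) := by exact_mod_cast hq0
        linarith
    _ ≤ (2*(N:ℝ)/(3*(a:ℝ)) + 1) * ((a:ℝ)+1) := by
        apply mul_le_mul_of_nonneg_right (by linarith)
        have : (1:ℝ) ≤ (a:ℝ) := by exact_mod_cast ha
        linarith

lemma term_nonneg (X : Set ℤ) (N : ℕ) :
    0 ≤ ((X ∩ Set.Icc (-(N:ℤ)) (N:ℤ)).ncard : ℝ) / (2 * N + 1) := by positivity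

lemma term_le_one (X : Set ℤ) (N : ℕ) :
    ((X ∩ Set.Icc (-(N:ℤ)) (N:ℤ)).ncard : ℝ) / (2 * N + 1) ≤ 1 := by
  rw [div_le_one (by positivity)]
  have h1 : (X ∩ Set.Icc (-(N:ℤ)) (N:ℤ)).ncard ≤ (Set.Icc (-(N:ℤ)) (N:ℤ)).ncard :=
    Set.ncard_le_ncard Set.inter_subset_right (Set.finite_Icc _ _)
  have h2 : (Set.Icc (-(N:ℤ)) (N:ℤ)).ncard = ((N:ℤ) + 1 - (-(N:ℤ))).toNat := by
    rw [← Finset.coe_Icc, Set.ncard_coe_finset, Int.card_Icc]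
  have h3 : (((N:ℤ) + 1 - (-(N:ℤ))).toNat : ℝ) = 2 * (N:ℝ) + 1 := by
    have e0 : ((((N:ℤ) + 1 - (-(N:ℤ))).toNat : ℕ) : ℤ) = 2*(N:ℤ) + 1 := by
      rw [Int.toNat_of_nonneg (by omega)]; ring
    calc ((((N:ℤ) + 1 - (-(N:ℤ))).toNat : ℕ) : ℝ)
        = (((((N:ℤ) + 1 - (-(N:ℤ))).toNat : ℕ) : ℤ) : ℝ) := by push_cast; ring
      _ = 2 * (N:ℝ) + 1 := by rw [e0]; push_cast; ring
  calc ((X ∩ Set.Icc (-(N:ℤ)) (N:ℤ)).ncard : ℝ)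
      ≤ ((Set.Icc (-(N:ℤ)) (N:ℤ)).ncard : ℝ) := by exact_mod_cast h1
    _ = 2 * (N:ℝ) + 1 := by rw [h2]; exact h3

lemma lowerDensity_nonneg (X : Set ℤ) : 0 ≤ lowerDensity X := by
  apply Filter.le_liminf_of_le
  · exact Filter.IsBoundedUnder.isCoboundedUnder_ge ⟨1,
      Filter.eventually_map.2 (Filter.Eventually.of_forall fun N => term_le_one X N)⟩
  · exact Filter.Eventually.of_forall fun N => term_nonneg X N

lemma density_le (a b u v : ℤ) (ha : 1 ≤ a) (h : u*a + v*b = 1) :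
    lowerDensity (Xset a b v) ≤ ((a:ℝ) + 1) / (3 * a) := by
  have haR : (1:ℝ) ≤ (a:ℝ) := by exact_mod_cast ha
  set f : ℕ → ℝ := fun N =>
    ((Xset a b v ∩ Set.Icc (-(N:ℤ)) (N:ℤ)).ncard : ℝ) / (2 * N + 1) with hf
  set g : ℕ → ℝ := fun N => ((a:ℝ)+1)/(3*a) + ((a:ℝ)+1)/(2*N+1) with hg
  have hfg : ∀ N, f N ≤ g N := by
    intro N
    have hden : (0:ℝ) < 2*(N:ℝ)+1 := by positivity
    rw [hf, hg]
    simp only []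
    rw [div_le_iff₀ hden]
    calc ((Xset a b v ∩ Set.Icc (-(N:ℤ)) (N:ℤ)).ncard : ℝ)
        ≤ (2*(N:ℝ)/(3*(a:ℝ)) + 1) * ((a:ℝ)+1) := card_bound a b u v ha h N
      _ ≤ (((a:ℝ)+1)/(3*(a:ℝ)) + ((a:ℝ)+1)/(2*(N:ℝ)+1)) * (2*(N:ℝ)+1) := by
          have e1 : (((a:ℝ)+1)/(3*(a:ℝ)) + ((a:ℝ)+1)/(2*(N:ℝ)+1)) * (2*(N:ℝ)+1)
              = ((a:ℝ)+1)*(2*(N:ℝ)+1)/(3*(a:ℝ)) + ((a:ℝ)+1) := by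
            field_simp
          have e2 : (2*(N:ℝ)/(3*(a:ℝ)) + 1) * ((a:ℝ)+1)
              = ((a:ℝ)+1)*(2*(N:ℝ))/(3*(a:ℝ)) + ((a:ℝ)+1) := by ring
          have e3 : ((a:ℝ)+1)*(2*(N:ℝ))/(3*(a:ℝ)) ≤ ((a:ℝ)+1)*(2*(N:ℝ)+1)/(3*(a:ℝ)) := by
            gcongr <;> nlinarith [Nat.cast_nonneg (α := ℝ) N]
          linarith
  have hgt : Filter.Tendsto g Filter.atTop (nhds (((a:ℝ)+1)/(3*a))) := by
    have h1 : Filter.Tendsto (fun N : ℕ => 2*(N:ℝ)+1) Filter.atTop Filter.atTop := by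
      apply Filter.tendsto_atTop_add_const_right
      exact Filter.Tendsto.const_mul_atTop two_pos tendsto_natCast_atTop_atTop
    have h2 : Filter.Tendsto (fun N : ℕ => ((a:ℝ)+1)/(2*(N:ℝ)+1)) Filter.atTop (nhds 0) :=
      Filter.Tendsto.div_atTop tendsto_const_nhds h1
    have := Filter.Tendsto.add (tendsto_const_nhds
      (x := ((a:ℝ)+1)/(3*(a:ℝ))) (f := Filter.atTop (α := ℕ))) h2
    rw [add_zero] at this
    exact this
  have hbdd : Filter.IsBoundedUnder (· ≤ ·) Filter.atTop f :=
    ⟨((a:ℝ)+1)/(3*(a:ℝ)) + ((a:ℝ)+1), Filter.eventually_map.2 (Filter.Eventually.of_forall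
      fun N => le_trans (hfg N) (by
        have : ((a:ℝ)+1)/(2*(N:ℝ)+1) ≤ ((a:ℝ)+1) := by
          rw [div_le_iff₀ (by positivity)]
          nlinarith [Nat.cast_nonneg (α := ℝ) N]
        simp only [hg]
        linarith))⟩
  have hmain : Filter.liminf f Filter.atTop ≤ Filter.liminf g Filter.atTop := by
    have hu : Filter.IsBoundedUnder (· ≥ ·) Filter.atTop f :=
      ⟨0, Filter.eventually_map.2 (Filter.Eventually.of_forall fun N => term_nonneg _ N)⟩
    have hv : Filter.IsCoboundedUnder (· ≥ ·) Filter.atTop g := by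
      refine Filter.IsBoundedUnder.isCoboundedUnder_ge
        ⟨((a:ℝ)+1)/(3*(a:ℝ)) + ((a:ℝ)+1), Filter.eventually_map.2 (Filter.Eventually.of_forall
          fun N => ?_)⟩
      have h4 : ((a:ℝ)+1)/(2*(N:ℝ)+1) ≤ ((a:ℝ)+1) := by
        rw [div_le_iff₀ (by positivity)]
        nlinarith [Nat.cast_nonneg (α := ℝ) N]
      simp only [hg]
      linarith
    exact Filter.liminf_le_liminf (Filter.Eventually.of_forall hfg) hu hv
  rw [lowerDensity]
  calc Filter.liminf f Filter.atTop ≤ Filter.liminf g Filter.atTop := hmain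
    _ = ((a:ℝ)+1)/(3*a) := hgt.liminf_eq
theorem stmt12 (a b : ℤ) (hb : 1 ≤ b) (hba : b ≤ a) (ha : 6 ≤ a)
    (hcop : IsCoprime a b) :
    piercing {({0, a, a + b} : Set ℤ), ({0, -a, -(a + b)} : Set ℤ)} ≤ (a + 1 : ℝ) / (3 * a) ∧
    (a + 1 : ℝ) / (3 * a) < 2 / 5 := by
  obtain ⟨u, v, huv⟩ := hcop
  constructor
  · have hd := density_le a b u v (by omega) huv
    refine le_trans (csInf_le ?_ ?_) hd
    · refine ⟨0, ?_⟩
      rintro y ⟨Y, -, rfl⟩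
      exact lowerDensity_nonneg Y
    · refine ⟨Xset a b v, ?_, rfl⟩
      intro S hS
      rcases hS with rfl | hS
      · exact hits1 a b u v (by omega) huv
      · rw [Set.mem_singleton_iff] at hS
        subst hS
        exact hits2 a b u v (by omega) huv
  · have haR : (6:ℝ) ≤ (a:ℝ) := by exact_mod_cast ha
    rw [div_lt_iff₀ (by linarith)]
    linarith
end

section
/- Let a, b be coprime positive integers with a + b odd and F = {{0,a},{0,b}}. Any shooting pattern X ⊆ ℤ for F satisfies: in every block of a+b consecutive integers {m, m+1, ..., m+a+b-1} together with the periodicity constraints, at least (a+b+1)/2 residues mod (a+b) must contain shots infinitely often; consequently the lower asymptotic density of X is at least (a+b+1)/(2(a+b)). -/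
lemma coverBound (p a : ℤ) (hp : 0 < p) (hpodd : Odd p) (S : Finset ℤ)
    (hS : S ⊆ Finset.Ico 0 p)
    (hcov : ∀ j ∈ Finset.Ico (0:ℤ) p, j ∈ S ∨ (j + a) % p ∈ S) :
    p + 1 ≤ 2 * S.card := by
  classical
  set T := Finset.Ico (0:ℤ) p \ S with hT
  have hmaps : ∀ j ∈ T, (j + a) % p ∈ S := by
    intro j hj
    rw [hT, Finset.mem_sdiff] at hj
    rcases hcov j hj.1 with h | h
    · exact absurd h hj.2
    · exact h
  have hinj : Set.InjOn (fun j => (j + a) % p) T := by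
    intro x hx y hy hxy
    simp only [hT, Finset.coe_sdiff, Set.mem_diff, Finset.coe_Ico, Set.mem_Ico] at hx hy
    simp only [] at hxy
    have hmeq : Int.ModEq p (x + a) (y + a) := hxy
    have hd : p ∣ y - x := by
      have := hmeq.dvd
      simpa using this
    have h0 : y - x = 0 := Int.eq_zero_of_abs_lt_dvd hd (by rw [abs_lt]; omega)
    omega
  have hcard : T.card ≤ S.card := Finset.card_le_card_of_injOn _ hmaps hinj
  have hTc : T.card = p.toNat - S.card := by
    rw [hT, Finset.card_sdiff_of_subset hS, Int.card_Ico]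
    simp
  have hSc : S.card ≤ p.toNat := by
    have := Finset.card_le_card hS
    rwa [Int.card_Ico, show p - 0 = p by ring] at this
  obtain ⟨t, ht⟩ := hpodd
  have hpn : (p.toNat : ℤ) = p := Int.toNat_of_nonneg hp.le
  omega

lemma windowBound (a b : ℤ) (ha : 0 < a) (hb : 0 < b) (hodd : Odd (a + b))
    (X : Set ℤ) (hXa : Hits X {0, a}) (hXb : Hits X {0, b}) (m : ℤ) :
    a + b + 1 ≤ 2 * (@Finset.filter ℤ (· ∈ X) (Classical.decPred _) (Finset.Icc m (m + (a + b) - 1))).card := by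
  classical
  set p := a + b with hp
  have hppos : 0 < p := by omega
  set S := (Finset.Ico (0:ℤ) p).filter (fun j => m + j ∈ X) with hSdef
  have hcov : ∀ j ∈ Finset.Ico (0:ℤ) p, j ∈ S ∨ (j + a) % p ∈ S := by
    intro j hj
    rw [Finset.mem_Ico] at hj
    by_cases hjb : j < b
    · obtain ⟨s, hs, hsX⟩ := hXa (m + j)
      rcases hs with h0 | hA
      · left
        rw [hSdef, Finset.mem_filter, Finset.mem_Ico]
        refine ⟨⟨hj.1, hj.2⟩, by simpa [h0] using hsX⟩
      · right
        simp only [Set.mem_singleton_iff] at hA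
        have hmod : (j + a) % p = j + a := Int.emod_eq_of_lt (by omega) (by omega)
        rw [hSdef, Finset.mem_filter, Finset.mem_Ico, hmod]
        refine ⟨⟨by omega, by omega⟩, ?_⟩
        have : m + (j + a) = m + j + s := by rw [hA]; ring
        rwa [this]
    · obtain ⟨s, hs, hsX⟩ := hXb (m + (j - b))
      rcases hs with h0 | hB
      · right
        have hmod : (j + a) % p = j - b := by
          have : j + a = (j - b) + p * 1 := by omega
          rw [this, Int.add_mul_emod_self_left]
          exact Int.emod_eq_of_lt (by omega) (by omega)
        rw [hSdef, Finset.mem_filter, Finset.mem_Ico, hmod]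
        refine ⟨⟨by omega, by omega⟩, by simpa [h0] using hsX⟩
      · left
        simp only [Set.mem_singleton_iff] at hB
        rw [hSdef, Finset.mem_filter, Finset.mem_Ico]
        refine ⟨⟨hj.1, hj.2⟩, ?_⟩
        have : m + j = m + (j - b) + s := by rw [hB]; ring
        rwa [this]
  have hmain := coverBound p a hppos hodd S (Finset.filter_subset _ _) hcov
  have hcard : S.card ≤ ((Finset.Icc m (m + p - 1)).filter (· ∈ X)).card := by
    apply Finset.card_le_card_of_injOn (fun j => m + j)
    · intro j hj
      rw [hSdef, Finset.mem_coe, Finset.mem_filter, Finset.mem_Ico] at hj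
      rw [Finset.mem_coe, Finset.mem_filter, Finset.mem_Icc]
      beta_reduce
      exact ⟨⟨by omega, by omega⟩, hj.2⟩
    · intro x _ y _ h
      simpa using h
  omega

lemma sumWindows (p : ℤ) (hp : 0 < p) (X : Set ℤ)
    (hw : ∀ m : ℤ, p + 1 ≤ 2 * (@Finset.filter ℤ (· ∈ X) (Classical.decPred _) (Finset.Icc m (m + p - 1))).card)
    (N : ℕ) :
    ((2 * (N:ℤ) + 1) / p) * (p + 1) ≤
      2 * (@Finset.filter ℤ (· ∈ X) (Classical.decPred _) (Finset.Icc (-(N:ℤ)) N)).card := by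
  classical
  set k := (2 * (N:ℤ) + 1) / p with hk
  have hdm := Int.mul_ediv_add_emod (2 * (N:ℤ) + 1) p
  have hr0 := Int.emod_nonneg (2 * (N:ℤ) + 1) (ne_of_gt hp)
  have hr1 := Int.emod_lt_of_pos (2 * (N:ℤ) + 1) hp
  have hk0 : 0 ≤ k := Int.ediv_nonneg (by positivity) hp.le
  have hkp : k * p ≤ 2 * (N:ℤ) + 1 := by nlinarith
  set W : ℕ → Finset ℤ :=
    fun i => (Finset.Icc (-(N:ℤ) + i * p) (-(N:ℤ) + i * p + p - 1)).filter (· ∈ X) with hW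
  have hdisj : ∀ i ∈ Finset.range k.toNat, ∀ j ∈ Finset.range k.toNat, i ≠ j →
      Disjoint (W i) (W j) := by
    have key : ∀ i j : ℕ, i < j → Disjoint (W i) (W j) := by
      intro i j hij
      rw [Finset.disjoint_left]
      intro x hx1 hx2
      rw [hW, Finset.mem_filter, Finset.mem_Icc] at hx1 hx2
      have h1 : (i:ℤ) + 1 ≤ (j:ℤ) := by exact_mod_cast hij
      have h2 : ((i:ℤ) + 1) * p ≤ (j:ℤ) * p := mul_le_mul_of_nonneg_right h1 hp.le
      have := hx1.1.2
      have := hx2.1.1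
      nlinarith
    intro i _ j _ hij
    rcases lt_or_gt_of_ne hij with h | h
    · exact key i j h
    · exact (key j i h).symm
  set B := (Finset.range k.toNat).biUnion W with hB
  have hsub : B ⊆ (Finset.Icc (-(N:ℤ)) N).filter (· ∈ X) := by
    intro x hx
    rw [hB, Finset.mem_biUnion] at hx
    obtain ⟨i, hi, hxi⟩ := hx
    rw [Finset.mem_range] at hi
    rw [hW, Finset.mem_filter, Finset.mem_Icc] at hxi
    have hik : (i:ℤ) ≤ k - 1 := by
      have : ((i:ℤ)) < (k.toNat : ℤ) := by exact_mod_cast hi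
      omega
    have h1 : 0 ≤ (i:ℤ) * p := by positivity
    have h2 : (i:ℤ) * p ≤ (k - 1) * p := mul_le_mul_of_nonneg_right hik hp.le
    rw [Finset.mem_filter, Finset.mem_Icc]
    refine ⟨⟨by linarith [hxi.1.1], ?_⟩, hxi.2⟩
    have := hxi.1.2
    nlinarith
  have hsum : (k.toNat : ℤ) * (p + 1) ≤ 2 * (B.card : ℤ) := by
    rw [hB, Finset.card_biUnion hdisj]
    push_cast
    have : (k.toNat : ℤ) * (p + 1) = ∑ _i ∈ Finset.range k.toNat, (p + 1) := by
      rw [Finset.sum_const, nsmul_eq_mul, Finset.card_range]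
    rw [this, Finset.mul_sum]
    exact Finset.sum_le_sum (fun i _ => hw _)
  have hcard : B.card ≤ ((Finset.Icc (-(N:ℤ)) N).filter (· ∈ X)).card :=
    Finset.card_le_card hsub
  have hkn : (k.toNat : ℤ) = k := Int.toNat_of_nonneg hk0
  rw [hkn] at hsum
  have : (B.card : ℤ) ≤ (((Finset.Icc (-(N:ℤ)) N).filter (· ∈ X)).card : ℤ) := by
    exact_mod_cast hcard
  linarith

theorem stmt19 (a b : ℤ) (ha : 0 < a) (hb : 0 < b) (hcop : IsCoprime a b)
    (hodd : Odd (a + b)) (X : Set ℤ) (hXa : Hits X {0, a}) (hXb : Hits X {0, b}) :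
    ((a + b + 1 : ℝ) / 2 ≤
      ({r : ℤ | 0 ≤ r ∧ r < a + b ∧ ∀ m : ℤ, ∃ n ∈ X, m ≤ n ∧ n % (a + b) = r}).ncard) ∧
    (a + b + 1 : ℝ) / (2 * (a + b)) ≤ lowerDensity X := by
  classical
  set p := a + b with hpdef
  have hp : 0 < p := by omega
  constructor
  · -- Part 1
    set P : ℤ → Prop := fun r => ∀ m : ℤ, ∃ n ∈ X, m ≤ n ∧ n % p = r with hPdef
    set F : Finset ℤ := (Finset.Ico (0:ℤ) p).filter P with hF
    have hseteq : {r : ℤ | 0 ≤ r ∧ r < p ∧ P r} = ↑F := by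
      ext r
      simp only [hF, Set.mem_setOf_eq, Finset.coe_filter, Finset.mem_Ico]
      tauto
    have hcov : ∀ r ∈ Finset.Ico (0:ℤ) p, r ∈ F ∨ (r + a) % p ∈ F := by
      intro r hr
      rw [Finset.mem_Ico] at hr
      by_contra hcon
      push_neg at hcon
      obtain ⟨hr1, hr2⟩ := hcon
      set r' := (r + a) % p with hr'
      have hr'mem : 0 ≤ r' ∧ r' < p :=
        ⟨Int.emod_nonneg _ (ne_of_gt hp), Int.emod_lt_of_pos _ hp⟩
      have hnP1 : ¬ P r := by
        intro h
        exact hr1 (by rw [hF, Finset.mem_filter, Finset.mem_Ico]; exact ⟨⟨hr.1, hr.2⟩, h⟩)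
      have hnP2 : ¬ P r' := by
        intro h
        exact hr2 (by rw [hF, Finset.mem_filter, Finset.mem_Ico]; exact ⟨⟨hr'mem.1, hr'mem.2⟩, h⟩)
      simp only [hPdef] at hnP1 hnP2
      push_neg at hnP1 hnP2
      obtain ⟨m₁, hm₁⟩ := hnP1
      obtain ⟨m₂, hm₂⟩ := hnP2
      set u := max (max (m₁ - r) (m₂ + b - r)) 0 with hu
      have hu0 : 0 ≤ u := le_max_right _ _
      have hpu : u ≤ p * u := by nlinarith
      set n := r + p * u with hn
      have hn1 : m₁ ≤ n := by
        have : m₁ - r ≤ u := le_trans (le_max_left _ _) (le_max_left _ _)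
        omega
      have hn2 : m₂ + b ≤ n := by
        have : m₂ + b - r ≤ u := le_trans (le_max_right _ _) (le_max_left _ _)
        omega
      have hnmod : n % p = r := by
        rw [hn, Int.add_mul_emod_self_left, Int.emod_eq_of_lt hr.1 hr.2]
      by_cases hrb : r < b
      · obtain ⟨s, hs, hsX⟩ := hXa n
        rcases hs with h0 | hA
        · exact hm₁ (n + s) (by simpa [h0] using hsX) (by omega) (by simpa [h0] using hnmod)
        · simp only [Set.mem_singleton_iff] at hA
          have hmod2 : (n + s) % p = r' := by
            rw [hA, hr', hn]
            rw [show r + p * u + a = r + a + p * u by ring, Int.add_mul_emod_self_left]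
          exact hm₂ (n + s) hsX (by rw [hA]; omega) hmod2
      · obtain ⟨s, hs, hsX⟩ := hXb (n - b)
        rcases hs with h0 | hB
        · have hmod2 : (n - b + s) % p = r' := by
            rw [h0, add_zero, hr', hn]
            rw [show r + p * u - b = r + a + p * (u - 1) by rw [hpdef]; ring,
              Int.add_mul_emod_self_left]
          exact hm₂ (n - b + s) hsX (by rw [h0]; omega) hmod2
        · simp only [Set.mem_singleton_iff] at hB
          have he : n - b + s = n := by rw [hB]; ring
          exact hm₁ (n - b + s) hsX (by omega) (by rw [he]; exact hnmod)
    have hmain := coverBound p a hp hodd F (Finset.filter_subset _ _) hcov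
    rw [hseteq, Set.ncard_coe_finset]
    rw [div_le_iff₀ (by norm_num : (0:ℝ) < 2)]
    have h2 : (p : ℝ) + 1 ≤ 2 * F.card := by exact_mod_cast hmain
    have hpr : (p : ℝ) = (a : ℝ) + b := by rw [hpdef]; push_cast; ring
    linarith
  · -- Part 2
    have hw : ∀ m : ℤ, p + 1 ≤ 2 * (@Finset.filter ℤ (· ∈ X) (Classical.decPred _) (Finset.Icc m (m + p - 1))).card := by
      intro m
      have := windowBound a b ha hb hodd X hXa hXb m
      convert this using 3
    have hblk := sumWindows p hp X hw
    set f : ℕ → ℝ := fun N =>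
      ((X ∩ Set.Icc (-(N:ℤ)) (N:ℤ)).ncard : ℝ) / (2 * N + 1) with hf
    set g : ℕ → ℝ := fun N =>
      ((p:ℝ) + 1) / (2 * p) - ((p:ℝ) + 1) / (2 * (2 * N + 1)) with hg
    have hncard : ∀ N : ℕ, (X ∩ Set.Icc (-(N:ℤ)) (N:ℤ)).ncard
        = (@Finset.filter ℤ (· ∈ X) (Classical.decPred _) (Finset.Icc (-(N:ℤ)) N)).card := by
      intro N
      rw [← Set.ncard_coe_finset]
      congr 1
      ext x
      simp only [Set.mem_inter_iff, Set.mem_Icc, Finset.coe_filter, Finset.mem_Icc,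
        Set.mem_setOf_eq]
      tauto
    have hgf : ∀ N, g N ≤ f N := by
      intro N
      set k := (2 * (N:ℤ) + 1) / p with hk
      have hdm := Int.mul_ediv_add_emod (2 * (N:ℤ) + 1) p
      have hr1 := Int.emod_lt_of_pos (2 * (N:ℤ) + 1) hp
      have hr0 := Int.emod_nonneg (2 * (N:ℤ) + 1) (ne_of_gt hp)
      set c : ℝ := ((X ∩ Set.Icc (-(N:ℤ)) (N:ℤ)).ncard : ℝ) with hc
      have hA : (0:ℝ) < 2 * (N:ℝ) + 1 := by positivity
      have hP : (0:ℝ) < (p:ℝ) := by exact_mod_cast hp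
      have hkc : (k:ℝ) * ((p:ℝ) + 1) ≤ 2 * c := by
        rw [hc, hncard N]
        exact_mod_cast hblk N
      have hklb : 2 * (N:ℝ) + 1 < ((k:ℝ) + 1) * p := by
        have : (2 * (N:ℤ) + 1) < (k + 1) * p := by nlinarith
        exact_mod_cast this
      have key : ((p:ℝ) + 1) * ((2 * N + 1) - p) ≤ 2 * p * c := by
        have h1 : (2 * (N:ℝ) + 1) - p ≤ k * p := by nlinarith
        have h2 : ((p:ℝ) + 1) * ((2 * N + 1) - p) ≤ ((p:ℝ) + 1) * (k * p) :=
          mul_le_mul_of_nonneg_left h1 (by linarith)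
        have h3 : ((p:ℝ) + 1) * (k * p) = p * (k * (p + 1)) := by ring
        have h4 : (p:ℝ) * (k * (p + 1)) ≤ p * (2 * c) :=
          mul_le_mul_of_nonneg_left hkc hP.le
        nlinarith
      have e1 : g N = (((p:ℝ) + 1) * ((2 * N + 1) - p)) / (2 * p * (2 * N + 1)) := by
        rw [hg]
        field_simp
      have e2 : f N = (2 * p * c) / (2 * p * (2 * N + 1)) := by
        rw [hf, hc]
        rw [mul_div_mul_left _ _ (by positivity : (2:ℝ) * p ≠ 0)]
      rw [e1, e2]
      gcongr
    have hden : Filter.Tendsto (fun N : ℕ => (2 * (2 * (N:ℝ) + 1))) Filter.atTop Filter.atTop := by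
      apply Filter.tendsto_atTop_mono (fun N => ?_) tendsto_natCast_atTop_atTop
      have : (0:ℝ) ≤ (N:ℝ) := Nat.cast_nonneg N
      linarith
    have h2 : Filter.Tendsto (fun N : ℕ => ((p:ℝ) + 1) / (2 * (2 * N + 1)))
        Filter.atTop (nhds 0) := Filter.Tendsto.div_atTop tendsto_const_nhds hden
    have hgt : Filter.Tendsto g Filter.atTop (nhds (((p:ℝ) + 1) / (2 * p))) := by
      have := Filter.Tendsto.const_sub (((p:ℝ) + 1) / (2 * p)) h2
      simpa using this
    have hlim : Filter.liminf g Filter.atTop = ((p:ℝ) + 1) / (2 * p) := hgt.liminf_eq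
    have hfle1 : ∀ N : ℕ, f N ≤ 1 := by
      intro N
      rw [hf]
      simp only []
      rw [div_le_one (by positivity)]
      rw [hncard N]
      have h1 : (@Finset.filter ℤ (· ∈ X) (Classical.decPred _) (Finset.Icc (-(N:ℤ)) N)).card
          ≤ (Finset.Icc (-(N:ℤ)) N).card := Finset.card_filter_le _ _
      have h2 : (Finset.Icc (-(N:ℤ)) N).card = 2 * N + 1 := by
        rw [Int.card_Icc]
        omega
      rw [h2] at h1
      have := (Nat.cast_le (α := ℝ)).mpr h1
      push_cast at this
      linarith
    have hfinal : ((p:ℝ) + 1) / (2 * p) ≤ lowerDensity X := by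
      rw [← hlim]
      exact Filter.liminf_le_liminf (Filter.Eventually.of_forall hgf)
        hgt.isBoundedUnder_ge
        (Filter.isCoboundedUnder_ge_of_le _ hfle1)
    have hcast : ((a:ℝ) + b + 1) / (2 * ((a:ℝ) + b)) = ((p:ℝ) + 1) / (2 * p) := by
      rw [hpdef]; push_cast; ring_nf
    rw [← hcast] at hfinal
    convert hfinal using 2
end
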